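/- Two polynomials p and r with complex coefficients have equal Gaussian expectation, E(p) = E(r), if and only if there exists a polynomial q with complex coefficients such that p − r = q′ − X·q (i.e., if and only if p and r represent the same homology class in the complex whose differential sends qη to q′ − Xq). -/

import Mathlib

open Polynomial MeasureTheory

noncomputable def gaussianExpectation (p : Polynomial ℂ) : ℂ :=
  (∫ x : ℝ, p.eval (x : ℂ) * Real.exp (-x ^ 2 / 2)) /
    (∫ x : ℝ, (Real.exp (-x ^ 2 / 2) : ℂ))

lemma integrable_poly_gauss (s : Polynomial ℂ) :
    Integrable (fun x : ℝ => s.eval (x : ℂ) * Real.exp (-x ^ 2 / 2)) := by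
  induction s using Polynomial.induction_on' with
  | add p q hp hq =>
    exact (hp.add hq).congr (Filter.Eventually.of_forall fun x => by simp [eval_add, add_mul])
  | monomial n a =>
    have hmain : Integrable (fun x : ℝ => x ^ n * Real.exp (-(1/2 : ℝ) * x ^ 2)) := by
      have := integrable_rpow_mul_exp_neg_mul_sq (b := (1/2 : ℝ)) (by norm_num)
        (s := (n : ℝ)) (by exact_mod_cast neg_one_lt_zero.trans_le n.cast_nonneg)
      simpa [Real.rpow_natCast] using this
    have hbase : Integrable (fun x : ℝ => ((x : ℂ) ^ n * Real.exp (-x ^ 2 / 2))) := by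
      refine Integrable.mono' hmain.abs ?_ ?_
      · exact (Continuous.aestronglyMeasurable (by continuity))
      · filter_upwards with x
        have h1 : ‖((x : ℂ) ^ n * ((Real.exp (-x ^ 2 / 2) : ℝ) : ℂ))‖
            = |x| ^ n * Real.exp (-x ^ 2 / 2) := by
          rw [norm_mul, norm_pow, Complex.norm_real, Complex.norm_real, Real.norm_eq_abs,
            Real.norm_eq_abs, Real.abs_exp]
        rw [h1]
        have h2 : |x ^ n * Real.exp (-(1/2 : ℝ) * x ^ 2)|
            = |x| ^ n * Real.exp (-(1/2 : ℝ) * x ^ 2) := by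
          rw [abs_mul, abs_pow, Real.abs_exp]
        rw [h2]
        have : -x ^ 2 / 2 = -(1/2 : ℝ) * x ^ 2 := by ring
        rw [this]
    have heq : (fun x : ℝ => ((monomial n a).eval (x : ℂ)) * Real.exp (-x ^ 2 / 2))
        = fun x : ℝ => a * ((x : ℂ) ^ n * Real.exp (-x ^ 2 / 2)) := by
      funext x; simp only [eval_monomial]; ring
    rw [heq]
    exact hbase.const_mul a

lemma integral_deriv_gauss_zero (q : Polynomial ℂ) :
    (∫ x : ℝ, ((derivative q - X * q).eval (x : ℂ)) * (Real.exp (-x ^ 2 / 2) : ℂ)) = 0 := by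
  apply integral_eq_zero_of_hasDerivAt_of_integrable
    (f := fun x : ℝ => q.eval (x : ℂ) * Real.exp (-x ^ 2 / 2))
  · intro x
    have h1 : HasDerivAt (fun y : ℝ => q.eval (y : ℂ)) ((derivative q).eval (x : ℂ)) x :=
      (q.hasDerivAt (x : ℂ)).comp_ofReal
    have h2r : HasDerivAt (fun y : ℝ => Real.exp (-y ^ 2 / 2))
        (Real.exp (-x ^ 2 / 2) * (-x)) x := by
      have hinner : HasDerivAt (fun y : ℝ => -y ^ 2 / 2) (-x) x := by
        have : HasDerivAt (fun y : ℝ => -y ^ 2 / 2) _ x := ((hasDerivAt_pow 2 x).neg).div_const 2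
        convert this using 1
        simp; ring
      exact (Real.hasDerivAt_exp _).comp x hinner
    have h2 : HasDerivAt (fun y : ℝ => (Real.exp (-y ^ 2 / 2) : ℂ))
        ((Real.exp (-x ^ 2 / 2) * (-x) : ℝ) : ℂ) x := h2r.ofReal_comp
    have : HasDerivAt (fun y : ℝ => q.eval (y : ℂ) * (Real.exp (-y ^ 2 / 2) : ℂ)) _ x := h1.mul h2
    refine this.congr_deriv ?_
    push_cast
    simp [eval_sub, eval_mul]
    ring
  · exact integrable_poly_gauss _
  · exact integrable_poly_gauss _

lemma gauss_denom_ne_zero : (∫ x : ℝ, (Real.exp (-x ^ 2 / 2) : ℂ)) ≠ 0 := by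
  have : (∫ x : ℝ, (Real.exp (-x ^ 2 / 2) : ℂ))
      = ((∫ x : ℝ, Real.exp (-x ^ 2 / 2) : ℝ) : ℂ) := integral_ofReal
  rw [this]
  have heq : (∫ x : ℝ, Real.exp (-x ^ 2 / 2)) = ∫ x : ℝ, Real.exp (-(1/2 : ℝ) * x ^ 2) := by
    congr 1; funext x; congr 1; ring
  rw [heq, integral_gaussian]
  simp only [ne_eq, Complex.ofReal_eq_zero]
  positivity

noncomputable def gaussL : Polynomial ℂ × ℂ →ₗ[ℂ] Polynomial ℂ where
  toFun qc := derivative qc.1 - X * qc.1 + C qc.2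
  map_add' a b := by
    simp only [Prod.fst_add, Prod.snd_add, derivative_add, C_add, mul_add]
    ring
  map_smul' m a := by
    simp only [Prod.smul_fst, Prod.smul_snd, RingHom.id_apply,
      smul_eq_C_mul, C_mul, derivative_C_mul, smul_eq_mul, mul_sub, mul_add]
    ring

lemma X_pow_mem_range (n : ℕ) : (X : Polynomial ℂ) ^ n ∈ LinearMap.range gaussL := by
  induction n using Nat.strong_induction_on with
  | _ n ih =>
    match n with
    | 0 =>
      refine ⟨(0, 1), ?_⟩
      simp [gaussL]
    | Nat.succ m =>
      have hmem : (X : Polynomial ℂ) ^ (m - 1) ∈ LinearMap.range gaussL := by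
        exact ih (m - 1) (by omega)
      have h1 : gaussL (-(X ^ m), 0) = X ^ (m + 1) - C (m : ℂ) * X ^ (m - 1) := by
        simp only [gaussL, LinearMap.coe_mk, AddHom.coe_mk, derivative_neg,
          derivative_X_pow, map_zero, add_zero, mul_neg]
        ring
      have : (X : Polynomial ℂ) ^ (m + 1)
          = gaussL (-(X ^ m), 0) + C (m : ℂ) * X ^ (m - 1) := by
        rw [h1]; ring
      rw [this]
      exact Submodule.add_mem _ (LinearMap.mem_range_self _ _)
        (by simpa [smul_eq_C_mul] using Submodule.smul_mem _ (m : ℂ) hmem)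

lemma exists_rep (s : Polynomial ℂ) :
    ∃ (q : Polynomial ℂ) (c : ℂ), s = derivative q - X * q + C c := by
  have hs : s ∈ LinearMap.range gaussL := by
    induction s using Polynomial.induction_on' with
    | add p q hp hq => exact Submodule.add_mem _ hp hq
    | monomial n a =>
      have : (monomial n a : Polynomial ℂ) = a • (X ^ n) := by
        rw [smul_eq_C_mul, C_mul_X_pow_eq_monomial]
      rw [this]
      exact Submodule.smul_mem _ _ (X_pow_mem_range n)
  obtain ⟨⟨q, c⟩, hqc⟩ := hs
  exact ⟨q, c, by rw [← hqc]; rfl⟩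

theorem gaussian_expectation_eq_iff_homologous (p r : Polynomial ℂ) :
    gaussianExpectation p = gaussianExpectation r ↔
      ∃ q : Polynomial ℂ, p - r = derivative q - X * q := by
  have hI := gauss_denom_ne_zero
  constructor
  · intro h
    obtain ⟨q, c, hqc⟩ := exists_rep (p - r)
    -- compute the integral of (p - r)
    have hint : ∫ x : ℝ, ((p - r).eval (x : ℂ)) * Real.exp (-x ^ 2 / 2)
        = c * ∫ x : ℝ, (Real.exp (-x ^ 2 / 2) : ℂ) := by
      rw [hqc]
      have : ∀ x : ℝ, ((derivative q - X * q + C c).eval (x : ℂ)) * Real.exp (-x ^ 2 / 2)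
          = ((derivative q - X * q).eval (x : ℂ)) * Real.exp (-x ^ 2 / 2)
            + c * Real.exp (-x ^ 2 / 2) := by
        intro x; simp only [eval_add, eval_C]; ring
      have hc2 : Integrable (fun x : ℝ => c * (Real.exp (-x ^ 2 / 2) : ℂ)) := by
        have := (integrable_poly_gauss (1 : Polynomial ℂ)).const_mul c
        refine this.congr (Filter.Eventually.of_forall fun x => ?_)
        simp
      rw [integral_congr_ae (Filter.Eventually.of_forall this),
        integral_add (integrable_poly_gauss (derivative q - X * q)) hc2,
        integral_deriv_gauss_zero, zero_add, integral_const_mul]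
    have hsub : ∫ x : ℝ, ((p - r).eval (x : ℂ)) * Real.exp (-x ^ 2 / 2)
        = (∫ x : ℝ, p.eval (x : ℂ) * Real.exp (-x ^ 2 / 2))
          - ∫ x : ℝ, r.eval (x : ℂ) * Real.exp (-x ^ 2 / 2) := by
      rw [← integral_sub (integrable_poly_gauss p) (integrable_poly_gauss r)]
      congr 1; funext x; simp [eval_sub]; ring
    have hzero : (∫ x : ℝ, p.eval (x : ℂ) * Real.exp (-x ^ 2 / 2))
        - ∫ x : ℝ, r.eval (x : ℂ) * Real.exp (-x ^ 2 / 2) = 0 := by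
      have h' : (∫ x : ℝ, p.eval (x : ℂ) * Real.exp (-x ^ 2 / 2)) /
            (∫ x : ℝ, (Real.exp (-x ^ 2 / 2) : ℂ))
          = (∫ x : ℝ, r.eval (x : ℂ) * Real.exp (-x ^ 2 / 2)) /
            (∫ x : ℝ, (Real.exp (-x ^ 2 / 2) : ℂ)) := h
      have heq : (∫ x : ℝ, p.eval (x : ℂ) * Real.exp (-x ^ 2 / 2))
          = ∫ x : ℝ, r.eval (x : ℂ) * Real.exp (-x ^ 2 / 2) :=
        mul_right_cancel₀ hI ((div_eq_div_iff hI hI).mp h')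
      rw [heq, sub_self]
    have hc : c = 0 := by
      have : c * ∫ x : ℝ, (Real.exp (-x ^ 2 / 2) : ℂ) = 0 := by
        rw [← hint, hsub, hzero]
      exact (mul_eq_zero.mp this).resolve_right hI
    exact ⟨q, by rw [hqc, hc]; simp⟩
  · rintro ⟨q, hq⟩
    have hint : ∫ x : ℝ, ((p - r).eval (x : ℂ)) * Real.exp (-x ^ 2 / 2) = 0 := by
      rw [hq]; exact integral_deriv_gauss_zero q
    have hsub : (∫ x : ℝ, p.eval (x : ℂ) * Real.exp (-x ^ 2 / 2))
        = ∫ x : ℝ, r.eval (x : ℂ) * Real.exp (-x ^ 2 / 2) := by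
      have : ∫ x : ℝ, ((p - r).eval (x : ℂ)) * Real.exp (-x ^ 2 / 2)
          = (∫ x : ℝ, p.eval (x : ℂ) * Real.exp (-x ^ 2 / 2))
            - ∫ x : ℝ, r.eval (x : ℂ) * Real.exp (-x ^ 2 / 2) := by
        rw [← integral_sub (integrable_poly_gauss p) (integrable_poly_gauss r)]
        congr 1; funext x; simp [eval_sub]; ring
      rw [this] at hint
      exact sub_eq_zero.mp hint
    show (∫ x : ℝ, p.eval (x : ℂ) * Real.exp (-x ^ 2 / 2)) / _
        = (∫ x : ℝ, r.eval (x : ℂ) * Real.exp (-x ^ 2 / 2)) / _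
    rw [hsub]
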